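/- Let ω be a weight function with γ(ω) > 0. Then γ(ω) + 1 = γ((ω^ι)_⋆) as an equality in [0,+∞], where (ω^ι)_⋆(t) := inf_{s>0}(ω(1/s) + ts) for t ≥ 0 is the lower Legendre conjugate of ω^ι(s) := ω(1/s). -/

import Mathlib

open Filter MeasureTheory Set Asymptotics

noncomputable section

/-- A *weight function*: continuous and nondecreasing on `[0,∞)`, vanishing at `0`,
and tending to `+∞` at `+∞`. -/
structure IsWeightFunction (ω : ℝ → ℝ) : Prop where
  continuousOn : ContinuousOn ω (Set.Ici 0)
  monotoneOn : MonotoneOn ω (Set.Ici 0)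
  map_zero : ω 0 = 0
  tendsto_atTop : Filter.Tendsto ω Filter.atTop Filter.atTop

/-- Condition `(P_{ω,γ})`: there is `K > 1` with `limsup_{t→∞} ω(K^γ t)/ω(t) < K`,
expressed through an eventual bound by some `c < K`. -/
def Pcond (ω : ℝ → ℝ) (γ : ℝ) : Prop :=
  ∃ K : ℝ, 1 < K ∧ ∃ c : ℝ, c < K ∧ ∀ᶠ t : ℝ in Filter.atTop, ω (K ^ γ * t) / ω t ≤ c

/-- The growth index `γ(ω) ∈ [0,+∞]`, with `sup ∅ = 0`. -/
noncomputable def gammaIndex (ω : ℝ → ℝ) : ENNReal :=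
  ⨆ γ ∈ {γ : ℝ | 0 < γ ∧ Pcond ω γ}, ENNReal.ofReal γ

/-- Condition `(ω₁)`. -/
def Omega1 (ω : ℝ → ℝ) : Prop :=
  ∃ L : ℝ, 1 ≤ L ∧ ∀ t : ℝ, 0 ≤ t → ω (2 * t) ≤ L * (ω t + 1)

/-- Condition `(ω₃)`: `log t = o(ω t)` as `t → ∞`. -/
def Omega3 (ω : ℝ → ℝ) : Prop :=
  (fun t : ℝ => Real.log t) =o[Filter.atTop] ω

/-- Condition `(ω₄)`: `t ↦ ω (exp t)` is convex on `ℝ`. -/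
def Omega4 (ω : ℝ → ℝ) : Prop :=
  ConvexOn ℝ Set.univ (fun t : ℝ => ω (Real.exp t))

/-- Condition `(ω₅)`: `ω t = o(t)` as `t → ∞`. -/
def Omega5 (ω : ℝ → ℝ) : Prop :=
  ω =o[Filter.atTop] (fun t : ℝ => t)

/-- Condition `(ω_snq)`. -/
def OmegaSnq (ω : ℝ → ℝ) : Prop :=
  ∃ C : ℝ, 0 < C ∧ ∀ y : ℝ, 0 < y →
    (∫⁻ t in Set.Ioi (1:ℝ), ENNReal.ofReal (ω (y * t) / t ^ 2)) ≤
      ENNReal.ofReal (C * (ω y + 1))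

/-- `ω ∈ W₀`: normalized weight function with `(ω₃)` and `(ω₄)`. -/
def InW0 (ω : ℝ → ℝ) : Prop :=
  IsWeightFunction ω ∧ (∀ t ∈ Set.Icc (0:ℝ) 1, ω t = 0) ∧ Omega3 ω ∧ Omega4 ω

/-- The Legendre–Fenchel–Young conjugate `φ*_ω(x) = sup {x y − ω(e^y) : y ≥ 0}`. -/
noncomputable def phiStar (ω : ℝ → ℝ) (x : ℝ) : ℝ :=
  sSup ((fun y : ℝ => x * y - ω (Real.exp y)) '' Set.Ici 0)

/-- The associated weight matrix `W^l_j = exp((1/l) φ*_ω(l j))`. -/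
noncomputable def Wseq (ω : ℝ → ℝ) (l : ℝ) (j : ℕ) : ℝ :=
  Real.exp ((1 / l) * phiStar ω (l * (j : ℝ)))

/-- `w^l_j = W^l_j / j!`. -/
noncomputable def wseq (ω : ℝ → ℝ) (l : ℝ) (j : ℕ) : ℝ :=
  Wseq ω l j / (Nat.factorial j : ℝ)

/-- `h_M(t) = inf_{k ∈ ℕ} M_k t^k`. -/
noncomputable def hFun (M : ℕ → ℝ) (t : ℝ) : ℝ :=
  ⨅ k : ℕ, M k * t ^ k

/-- The associated function `ω_M(t) = sup_p log (t^p / M_p)` for `t > 0`, `ω_M(0) = 0`. -/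
noncomputable def assocWeight (M : ℕ → ℝ) (t : ℝ) : ℝ :=
  if t ≤ 0 then 0 else ⨆ p : ℕ, Real.log (t ^ p / M p)

/-- The upper Legendre conjugate `ω⋆(s) = sup_{t ≥ 0} (ω(t) − s t)`. -/
noncomputable def upperConj (ω : ℝ → ℝ) (s : ℝ) : ℝ :=
  sSup ((fun t : ℝ => ω t - s * t) '' Set.Ici 0)

/-- `(ω⋆)^ι(t) = ω⋆(1/t)` for `t > 0`, with value `0` at `t = 0`. -/
noncomputable def upperConjIota (ω : ℝ → ℝ) (t : ℝ) : ℝ :=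
  if t = 0 then 0 else upperConj ω (1 / t)

/-- The lower Legendre conjugate `(ω^ι)_⋆(t) = inf_{s > 0} (ω(1/s) + t s)`. -/
noncomputable def lowerConjIota (ω : ℝ → ℝ) (t : ℝ) : ℝ :=
  sInf ((fun s : ℝ => ω (1 / s) + t * s) '' Set.Ioi 0)

/-- The unbounded sector `S_γ ⊆ ℂ` of opening `γ π` bisected by direction `0`
(for `0 < γ < 2` it lies in `ℂ`). -/
def sector (γ : ℝ) : Set ℂ :=
  {z : ℂ | z ≠ 0 ∧ |Complex.arg z| < γ * Real.pi / 2}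

/-- `M ∈ LC`: positive, normalized, log-convex, `(M_p)^{1/p} → ∞`. -/
def LCseq (M : ℕ → ℝ) : Prop :=
  (∀ p, 0 < M p) ∧ M 0 = 1 ∧ M 0 ≤ M 1 ∧
  (∀ j : ℕ, 1 ≤ j → M j ^ 2 ≤ M (j - 1) * M (j + 1)) ∧
  Filter.Tendsto (fun p : ℕ => M p ^ ((1 : ℝ) / (p : ℝ))) Filter.atTop Filter.atTop

/-- The partial derivative `∂_i` of a function on `ℝ^d`. -/
noncomputable def partialDeriv {d : ℕ} (i : Fin d)
    (f : EuclideanSpace ℝ (Fin d) → ℂ) : EuclideanSpace ℝ (Fin d) → ℂ :=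
  fun x => fderiv ℝ f x (EuclideanSpace.single i 1)

/-- The iterated partial derivative `∂^j` for a multiindex `j ∈ ℕ^d`. -/
noncomputable def multiDeriv {d : ℕ} (j : Fin d → ℕ)
    (f : EuclideanSpace ℝ (Fin d) → ℂ) : EuclideanSpace ℝ (Fin d) → ℂ :=
  (List.finRange d).foldr (fun i g => (partialDeriv i)^[j i] g) f

end

section AuxLemmas

variable {ω : ℝ → ℝ}

lemma weight_nonneg (hω : IsWeightFunction ω) {t : ℝ} (ht : 0 ≤ t) : 0 ≤ ω t := by
  have := hω.monotoneOn (Set.mem_Ici.mpr le_rfl) (Set.mem_Ici.mpr ht) ht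
  simpa [hω.map_zero] using this

lemma lci_bddBelow (hω : IsWeightFunction ω) {t : ℝ} (ht : 0 ≤ t) :
    BddBelow ((fun s : ℝ => ω (1 / s) + t * s) '' Set.Ioi 0) := by
  refine ⟨0, ?_⟩
  rintro x ⟨s, hs, rfl⟩
  have hs' : (0:ℝ) < s := hs
  have h1 : 0 ≤ ω (1 / s) := weight_nonneg hω (by positivity)
  have h2 : 0 ≤ t * s := mul_nonneg ht hs'.le
  simpa using add_nonneg h1 h2

lemma lci_nonempty (ω : ℝ → ℝ) (t : ℝ) :
    ((fun s : ℝ => ω (1 / s) + t * s) '' Set.Ioi 0).Nonempty :=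
  ⟨_, ⟨1, by norm_num, rfl⟩⟩

lemma lci_le (hω : IsWeightFunction ω) {t u : ℝ} (ht : 0 ≤ t) (hu : 0 < u) :
    lowerConjIota ω t ≤ ω u + t / u := by
  have heq : ω u + t / u = (fun s : ℝ => ω (1 / s) + t * s) (1 / u) := by
    simp only [one_div_one_div]
    rw [div_eq_mul_one_div]
  rw [heq]
  exact csInf_le (lci_bddBelow hω ht) ⟨1 / u, Set.mem_Ioi.mpr (by positivity), rfl⟩

lemma lci_min_le (hω : IsWeightFunction ω) {t X : ℝ} (ht : 0 ≤ t) (hX : 0 < X) :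
    min (t / X) (ω X) ≤ lowerConjIota ω t := by
  apply le_csInf (lci_nonempty ω t)
  rintro b ⟨s, hs, rfl⟩
  have hs' : (0:ℝ) < s := hs
  rcases le_or_gt (1 / X) s with h | h
  · have h1 : t / X ≤ t * s := by
      rw [div_eq_mul_one_div]
      exact mul_le_mul_of_nonneg_left h ht
    have h2 : 0 ≤ ω (1 / s) := weight_nonneg (t := 1 / s) hω (by positivity)
    exact le_trans (min_le_left _ _) (by linarith)
  · have hXs : X ≤ 1 / s := by
      rw [le_div_iff₀ hs']
      have := (lt_div_iff₀ hX).mp h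
      nlinarith
    have h1 : ω X ≤ ω (1 / s) :=
      hω.monotoneOn (Set.mem_Ici.mpr hX.le) (Set.mem_Ici.mpr (by positivity)) hXs
    have h2 : 0 ≤ t * s := mul_nonneg ht hs'.le
    exact le_trans (min_le_right _ _) (by linarith)

lemma lci_nonneg (hω : IsWeightFunction ω) {t : ℝ} (ht : 0 ≤ t) :
    0 ≤ lowerConjIota ω t := by
  apply le_csInf (lci_nonempty ω t)
  rintro b ⟨s, hs, rfl⟩
  have hs' : (0:ℝ) < s := hs
  have h1 : 0 ≤ ω (1 / s) := weight_nonneg hω (by positivity)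
  have h2 : 0 ≤ t * s := mul_nonneg ht hs'.le
  simpa using add_nonneg h1 h2

lemma lci_tendsto (hω : IsWeightFunction ω) :
    Filter.Tendsto (lowerConjIota ω) Filter.atTop Filter.atTop := by
  rw [Filter.tendsto_atTop]
  intro b
  obtain ⟨X0, hX0⟩ := (hω.tendsto_atTop.eventually_ge_atTop b).exists_forall_of_atTop
  set X := max X0 1 with hXdef
  have hX : (0:ℝ) < X := lt_of_lt_of_le one_pos (le_max_right _ _)
  have hωX : b ≤ ω X := hX0 X (le_max_left _ _)
  filter_upwards [Filter.eventually_ge_atTop (max 0 (X * b))] with t ht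
  have ht0 : 0 ≤ t := le_trans (le_max_left _ _) ht
  have h1 : b ≤ t / X := by
    rw [le_div_iff₀ hX]
    calc b * X = X * b := mul_comm _ _
    _ ≤ t := le_trans (le_max_right _ _) ht
  exact le_trans (le_min h1 hωX) (lci_min_le hω ht0 hX)

lemma lci_approx (_hω : IsWeightFunction ω) {t : ℝ} (_ht : 0 ≤ t) :
    ∃ u : ℝ, 0 < u ∧ ω u + t / u ≤ lowerConjIota ω t + 1 := by
  have h1 : sInf ((fun s : ℝ => ω (1 / s) + t * s) '' Set.Ioi 0) <
      lowerConjIota ω t + 1 := lt_add_one _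
  obtain ⟨x, ⟨s, hs, rfl⟩, hx⟩ := exists_lt_of_csInf_lt (lci_nonempty ω t) h1
  have hs' : (0:ℝ) < s := hs
  refine ⟨1 / s, by positivity, ?_⟩
  have heq : t / (1 / s) = t * s := by field_simp
  rw [heq]
  exact hx.le

end AuxLemmas

section MainLemmas

variable {ω : ℝ → ℝ}

lemma lci_mono (hω : IsWeightFunction ω) {t₁ t₂ : ℝ} (ht₁ : 0 ≤ t₁) (h12 : t₁ ≤ t₂) :
    lowerConjIota ω t₁ ≤ lowerConjIota ω t₂ := by
  apply le_csInf (lci_nonempty ω t₂)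
  rintro b ⟨s, hs, rfl⟩
  have hs' : (0:ℝ) < s := hs
  have h1 : lowerConjIota ω t₁ ≤ ω (1 / s) + t₁ * s :=
    csInf_le (lci_bddBelow hω ht₁) ⟨s, hs, rfl⟩
  have h2 : t₁ * s ≤ t₂ * s := mul_le_mul_of_nonneg_right h12 hs'.le
  simp only []
  linarith

lemma pcond_step_up (hω : IsWeightFunction ω) {γ : ℝ} (hγ : 0 < γ)
    (hp : Pcond ω γ) : Pcond (lowerConjIota ω) (γ + 1) := by
  obtain ⟨K, hK, c0, hc0K, hev⟩ := hp
  set c := max c0 1 with hcdef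
  have hc1 : (1:ℝ) ≤ c := le_max_right _ _
  have hcK : c < K := max_lt hc0K hK
  have hKpos : (0:ℝ) < K := lt_trans one_pos hK
  have hKγ : (1:ℝ) < K ^ γ := Real.one_lt_rpow_iff_of_pos hKpos |>.mpr (Or.inl ⟨hK, hγ⟩)
  -- pointwise bound from T0 on
  have hωpos : ∀ᶠ t in Filter.atTop, (0:ℝ) < ω t := hω.tendsto_atTop.eventually_gt_atTop 0
  obtain ⟨T0, hT0⟩ := (hev.and hωpos).exists_forall_of_atTop
  set T := max T0 1 with hTdef
  have hT1 : (1:ℝ) ≤ T := le_max_right _ _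
  have hTpos : (0:ℝ) < T := lt_of_lt_of_le one_pos hT1
  have key : ∀ u : ℝ, T ≤ u → ω (K ^ γ * u) ≤ c * ω u := by
    intro u hu
    have hu0 : T0 ≤ u := le_trans (le_max_left _ _) hu
    obtain ⟨hr, hpos⟩ := hT0 u hu0
    have := (div_le_iff₀ hpos).mp hr
    calc ω (K ^ γ * u) ≤ c0 * ω u := this
    _ ≤ c * ω u := mul_le_mul_of_nonneg_right (le_max_left _ _) hpos.le
  -- constants
  set K' := (c + K) / 2 with hK'def
  have hK'1 : (1:ℝ) < K' := by simp only [hK'def]; linarith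
  have hK'pos : (0:ℝ) < K' := lt_trans one_pos hK'1
  have hcK' : c < K' := by simp only [hK'def]; linarith
  have hK'K : K' < K := by simp only [hK'def]; linarith
  set A := K' ^ (γ + 1) with hAdef
  have hApos : (0:ℝ) < A := Real.rpow_pos_of_pos hK'pos _
  have hA1 : (1:ℝ) < A := Real.one_lt_rpow_iff_of_pos hK'pos |>.mpr (Or.inl ⟨hK'1, by linarith⟩)
  have hABlt : A / K ^ γ < K' := by
    have h1 : A = K' ^ γ * K' := by
      rw [hAdef, Real.rpow_add hK'pos, Real.rpow_one]
    have h2 : K' ^ γ < K ^ γ := Real.rpow_lt_rpow hK'pos.le hK'K hγ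
    have h3 : (0:ℝ) < K ^ γ := Real.rpow_pos_of_pos hKpos _
    rw [h1, div_lt_iff₀ h3]
    nlinarith [Real.rpow_pos_of_pos hK'pos γ]
  set c' := max c (A / K ^ γ) with hc'def
  have hc'K' : c' < K' := max_lt hcK' hABlt
  have hc'1 : (1:ℝ) ≤ c' := le_trans hc1 (le_max_left _ _)
  have hc'pos : (0:ℝ) < c' := lt_of_lt_of_le one_pos hc'1
  set c'' := (c' + K') / 2 with hc''def
  have hc'c'' : c' < c'' := by simp only [hc''def]; linarith
  have hc''K' : c'' < K' := by simp only [hc''def]; linarith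
  -- main eventual estimate
  have hmain : ∀ᶠ t in Filter.atTop,
      lowerConjIota ω (A * t) ≤ c' * (lowerConjIota ω t + 1) := by
    filter_upwards [Filter.eventually_ge_atTop (max 1 (2 * T * (ω (2 * T) + 1)))] with t ht
    have ht1 : (1:ℝ) ≤ t := le_trans (le_max_left _ _) ht
    have ht0 : (0:ℝ) < t := lt_of_lt_of_le one_pos ht1
    have ht2 : 2 * T * (ω (2 * T) + 1) ≤ t := le_trans (le_max_right _ _) ht
    -- h t + 1 ≤ t / T
    have hbound : lowerConjIota ω t + 1 ≤ t / T := by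
      have h1 : lowerConjIota ω t ≤ ω (2 * T) + t / (2 * T) :=
        lci_le hω ht0.le (by positivity)
      have h2 : ω (2 * T) + 1 ≤ t / (2 * T) := by
        rw [le_div_iff₀ (by positivity : (0:ℝ) < 2 * T)]
        linarith
      have h3 : t / (2 * T) + t / (2 * T) = t / T := by field_simp; ring
      linarith
    -- approximate minimizer
    obtain ⟨u, hu0, hu⟩ := lci_approx hω ht0.le
    have hωu : 0 ≤ ω u := weight_nonneg hω hu0.le
    have htu : t / u ≤ t / T := le_trans (by linarith) hbound
    have huT : T ≤ u := by
      by_contra hcon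
      push_neg at hcon
      have : t / T < t / u := div_lt_div_of_pos_left ht0 hu0 hcon
      linarith
    -- the estimate
    have hKu : (0:ℝ) < K ^ γ * u := by positivity
    have h1 : lowerConjIota ω (A * t) ≤ ω (K ^ γ * u) + A * t / (K ^ γ * u) :=
      lci_le hω (by positivity) hKu
    have h2 : ω (K ^ γ * u) ≤ c * ω u := key u huT
    have h3 : A * t / (K ^ γ * u) = (A / K ^ γ) * (t / u) := by
      field_simp
    have h4 : c * ω u ≤ c' * ω u :=
      mul_le_mul_of_nonneg_right (le_max_left _ _) hωu
    have h5 : (A / K ^ γ) * (t / u) ≤ c' * (t / u) :=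
      mul_le_mul_of_nonneg_right (le_max_right _ _) (by positivity)
    calc lowerConjIota ω (A * t) ≤ ω (K ^ γ * u) + A * t / (K ^ γ * u) := h1
    _ ≤ c' * ω u + c' * (t / u) := by rw [h3]; linarith
    _ = c' * (ω u + t / u) := by ring
    _ ≤ c' * (lowerConjIota ω t + 1) := mul_le_mul_of_nonneg_left hu hc'pos.le
  -- conclude
  refine ⟨K', hK'1, c'', hc''K', ?_⟩
  have hHbig : ∀ᶠ t in Filter.atTop,
      max 1 (c' / (c'' - c')) ≤ lowerConjIota ω t :=
    (lci_tendsto hω).eventually_ge_atTop _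
  filter_upwards [hmain, hHbig] with t h1 h2
  have hH1 : (1:ℝ) ≤ lowerConjIota ω t := le_trans (le_max_left _ _) h2
  have hHpos : (0:ℝ) < lowerConjIota ω t := lt_of_lt_of_le one_pos hH1
  have hH2 : c' / (c'' - c') ≤ lowerConjIota ω t := le_trans (le_max_right _ _) h2
  have hc''c' : (0:ℝ) < c'' - c' := by linarith
  have h3 : c' ≤ (c'' - c') * lowerConjIota ω t := by
    rw [div_le_iff₀ hc''c'] at hH2
    linarith
  rw [div_le_iff₀ hHpos]
  calc lowerConjIota ω (K' ^ (γ + 1) * t) ≤ c' * (lowerConjIota ω t + 1) := h1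
  _ ≤ c'' * lowerConjIota ω t := by nlinarith
end MainLemmas

section DownLemma

variable {ω : ℝ → ℝ}

lemma pcond_step_down (hω : IsWeightFunction ω) {δ : ℝ} (hδ : 1 < δ)
    (hp : Pcond (lowerConjIota ω) δ) : Pcond ω (δ - 1) := by
  set H := lowerConjIota ω with hHdef
  obtain ⟨K, hK, c0, hc0K, hev⟩ := hp
  set c := max c0 1 with hcdef
  have hc1 : (1:ℝ) ≤ c := le_max_right _ _
  have hcpos : (0:ℝ) < c := lt_of_lt_of_le one_pos hc1
  have hcK : c < K := max_lt hc0K hK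
  have hKpos : (0:ℝ) < K := lt_trans one_pos hK
  have hδpos : (0:ℝ) < δ := lt_trans one_pos hδ
  have hγpos : (0:ℝ) < δ - 1 := by linarith
  set κ := K ^ δ with hκdef
  have hκ1 : (1:ℝ) < κ := Real.one_lt_rpow_iff_of_pos hKpos |>.mpr (Or.inl ⟨hK, hδpos⟩)
  have hκpos : (0:ℝ) < κ := lt_trans one_pos hκ1
  have hHpos : ∀ᶠ t in Filter.atTop, (0:ℝ) < H t := (lci_tendsto hω).eventually_gt_atTop 0
  obtain ⟨T0, hT0⟩ := (hev.and hHpos).exists_forall_of_atTop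
  set T := max T0 1 with hTdef
  have hT1 : (1:ℝ) ≤ T := le_max_right _ _
  have hTpos : (0:ℝ) < T := lt_of_lt_of_le one_pos hT1
  have key : ∀ t : ℝ, T ≤ t → H (κ * t) ≤ c * H t := by
    intro t ht
    obtain ⟨hr, hpos⟩ := hT0 t (le_trans (le_max_left _ _) ht)
    have := (div_le_iff₀ hpos).mp hr
    calc H (κ * t) ≤ c0 * H t := this
    _ ≤ c * H t := mul_le_mul_of_nonneg_right (le_max_left _ _) hpos.le
  have iterate : ∀ n : ℕ, ∀ t : ℝ, T ≤ t → H (κ ^ n * t) ≤ c ^ n * H t := by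
    intro n
    induction n with
    | zero => intro t _; simp
    | succ n ih =>
      intro t ht
      have ht0 : (0:ℝ) ≤ t := le_trans (by linarith) ht
      have hκt : T ≤ κ * t := le_trans ht (le_mul_of_one_le_left ht0 hκ1.le)
      have h1 : κ ^ (n + 1) * t = κ ^ n * (κ * t) := by ring
      calc H (κ ^ (n + 1) * t) = H (κ ^ n * (κ * t)) := by rw [h1]
      _ ≤ c ^ n * H (κ * t) := ih _ hκt
      _ ≤ c ^ n * (c * H t) :=
          mul_le_mul_of_nonneg_left (key t ht) (pow_nonneg hcpos.le n)
      _ = c ^ (n + 1) * H t := by ring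
  -- choose n with 2 * c ^ n < K ^ n
  obtain ⟨n, hn⟩ : ∃ n : ℕ, 2 < (K / c) ^ n :=
    pow_unbounded_of_one_lt 2 ((one_lt_div hcpos).mpr hcK)
  have h2cn : 2 * c ^ n < K ^ n := by
    rw [div_pow, lt_div_iff₀ (pow_pos hcpos n)] at hn
    linarith
  set c₁ := 2 * c ^ n with hc₁def
  have hcn1 : (1:ℝ) ≤ c ^ n := one_le_pow₀ hc1
  have hc₁2 : (2:ℝ) ≤ c₁ := by simp only [hc₁def]; linarith
  have hc₁pos : (0:ℝ) < c₁ := by linarith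
  -- key inequality : c₁ ^ (δ-1) * c₁ < κ ^ n
  have hκnKn : (κ:ℝ) ^ n = (K ^ n) ^ δ := by
    rw [hκdef, ← Real.rpow_natCast (K ^ δ) n, ← Real.rpow_natCast K n,
      ← Real.rpow_mul hKpos.le, ← Real.rpow_mul hKpos.le, mul_comm]
  have hkey : c₁ ^ (δ - 1) * c₁ < κ ^ n := by
    have h1 : c₁ ^ δ < (K ^ n) ^ δ :=
      Real.rpow_lt_rpow hc₁pos.le h2cn hδpos
    have h2 : c₁ ^ δ = c₁ ^ (δ - 1) * c₁ := by
      rw [← Real.rpow_add_one (ne_of_gt hc₁pos)]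
      norm_num
    rw [hκnKn, ← h2]
    exact h1
  have hup : c₁ ^ (δ - 1) < κ ^ n / c₁ := (lt_div_iff₀ hc₁pos).mpr hkey
  set lv := (c₁ ^ (δ - 1) + κ ^ n / c₁) / 2 with hlvdef
  have hlv1 : c₁ ^ (δ - 1) < lv := by simp only [hlvdef]; linarith
  have hlv2 : lv < κ ^ n / c₁ := by simp only [hlvdef]; linarith
  have hc₁γ1 : (1:ℝ) ≤ c₁ ^ (δ - 1) := Real.one_le_rpow (by linarith) hγpos.le
  have hlvgt1 : (1:ℝ) < lv := lt_of_le_of_lt hc₁γ1 hlv1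
  have hlvpos : (0:ℝ) < lv := lt_trans one_pos hlvgt1
  set K₁ := lv ^ (1 / (δ - 1)) with hK₁def
  have hK₁γ : K₁ ^ (δ - 1) = lv := by
    rw [hK₁def, ← Real.rpow_mul hlvpos.le, one_div,
      inv_mul_cancel₀ (ne_of_gt hγpos), Real.rpow_one]
  have hK₁c₁ : c₁ < K₁ := by
    have h1 : c₁ = (c₁ ^ (δ - 1)) ^ (1 / (δ - 1)) := by
      rw [← Real.rpow_mul hc₁pos.le, mul_one_div, div_self (ne_of_gt hγpos),
        Real.rpow_one]
    rw [h1, hK₁def]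
    exact Real.rpow_lt_rpow (Real.rpow_nonneg hc₁pos.le _) hlv1 (by positivity)
  have hK₁1 : (1:ℝ) < K₁ := lt_trans (by linarith) hK₁c₁
  refine ⟨K₁, hK₁1, c₁, hK₁c₁, ?_⟩
  filter_upwards [Filter.eventually_ge_atTop T,
    hω.tendsto_atTop.eventually_ge_atTop 1] with u huT hωu1
  have hu0 : (0:ℝ) < u := lt_of_lt_of_le hTpos huT
  have hωupos : (0:ℝ) < ω u := lt_of_lt_of_le one_pos hωu1
  set t := u * ω u with htdef
  have htT : T ≤ t := le_trans huT (le_mul_of_one_le_right hu0.le hωu1)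
  have ht0 : (0:ℝ) ≤ t := by positivity
  have hκn1 : (1:ℝ) ≤ κ ^ n := one_le_pow₀ hκ1.le
  have hκnpos : (0:ℝ) < κ ^ n := pow_pos hκpos n
  have hHt : H t ≤ 2 * ω u := by
    have h1 : H t ≤ ω u + t / u := lci_le hω ht0 hu0
    have h2 : t / u = ω u := by
      rw [htdef, mul_comm, mul_div_assoc, div_self (ne_of_gt hu0), mul_one]
    linarith
  have hs : H (κ ^ n * t) ≤ c₁ * ω u := by
    calc H (κ ^ n * t) ≤ c ^ n * H t := iterate n t htT
    _ ≤ c ^ n * (2 * ω u) :=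
        mul_le_mul_of_nonneg_left hHt (pow_nonneg hcpos.le n)
    _ = c₁ * ω u := by rw [hc₁def]; ring
  have hXpos : (0:ℝ) < lv * u := by positivity
  have hmin := lci_min_le hω (t := κ ^ n * t) (X := lv * u) (by positivity) hXpos
  have hratio : κ ^ n * t / (lv * u) = (κ ^ n / lv) * ω u := by
    rw [htdef]
    field_simp
  have hgt : c₁ * ω u < κ ^ n * t / (lv * u) := by
    rw [hratio]
    have h1 : c₁ < κ ^ n / lv := by
      rw [lt_div_iff₀ hlvpos]
      rw [lt_div_iff₀ hc₁pos] at hlv2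
      nlinarith
    exact mul_lt_mul_of_pos_right h1 hωupos
  have hfin : ω (lv * u) ≤ c₁ * ω u := by
    rcases le_total (κ ^ n * t / (lv * u)) (ω (lv * u)) with h' | h'
    · exfalso
      rw [min_eq_left h'] at hmin
      linarith
    · rw [min_eq_right h'] at hmin
      linarith
  rw [hK₁γ, div_le_iff₀ hωupos]
  exact hfin

end DownLemma

/-- Lemma on the lower conjugate: if `γ(ω) > 0` then
`γ(ω) + 1 = γ((ω^ι)_⋆)`. -/
theorem gammaIndex_lowerConjIota
    (ω : ℝ → ℝ) (hω : IsWeightFunction ω) (hγ : 0 < gammaIndex ω) :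
    gammaIndex ω + 1 = gammaIndex (lowerConjIota ω) := by
  have hne : ∃ γ : ℝ, 0 < γ ∧ Pcond ω γ := by
    by_contra hcon
    push_neg at hcon
    have h0 : gammaIndex ω = 0 := by
      rw [gammaIndex]
      refine le_antisymm ?_ zero_le
      refine iSup₂_le fun γ hγ' => ?_
      exact absurd hγ'.2 (hcon γ hγ'.1)
    rw [h0] at hγ
    exact lt_irrefl _ hγ
  apply le_antisymm
  · obtain ⟨γ₀, hγ₀, hp₀⟩ := hne
    haveI : Nonempty {γ : ℝ // γ ∈ {γ : ℝ | 0 < γ ∧ Pcond ω γ}} := ⟨⟨γ₀, hγ₀, hp₀⟩⟩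
    have heq : gammaIndex ω + 1 =
        ⨆ γ : {γ : ℝ // γ ∈ {γ : ℝ | 0 < γ ∧ Pcond ω γ}},
          (ENNReal.ofReal (γ : ℝ) + 1) := by
      rw [gammaIndex, iSup_subtype', ENNReal.iSup_add]
    rw [heq]
    refine iSup_le fun γ => ?_
    obtain ⟨γ, hγpos, hγp⟩ := γ
    have h1 : ENNReal.ofReal γ + 1 = ENNReal.ofReal (γ + 1) := by
      rw [ENNReal.ofReal_add hγpos.le zero_le_one, ENNReal.ofReal_one]
    rw [gammaIndex]
    simp only
    rw [h1]
    have hmem : (γ + 1) ∈ {δ : ℝ | 0 < δ ∧ Pcond (lowerConjIota ω) δ} :=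
      ⟨by linarith, pcond_step_up hω hγpos hγp⟩
    exact le_iSup₂ (f := fun δ (_ : δ ∈ {δ : ℝ | 0 < δ ∧ Pcond (lowerConjIota ω) δ}) =>
      ENNReal.ofReal δ) (γ + 1) hmem
  · rw [show gammaIndex (lowerConjIota ω) =
        ⨆ δ ∈ {δ : ℝ | 0 < δ ∧ Pcond (lowerConjIota ω) δ}, ENNReal.ofReal δ from rfl]
    refine iSup₂_le fun δ hδ => ?_
    obtain ⟨hδpos, hδp⟩ := hδ
    rcases le_or_gt δ 1 with h | h
    · calc ENNReal.ofReal δ ≤ ENNReal.ofReal 1 := ENNReal.ofReal_le_ofReal h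
      _ = 1 := ENNReal.ofReal_one
      _ ≤ gammaIndex ω + 1 := le_add_self
    · have hp := pcond_step_down hω h hδp
      have hmem : (δ - 1) ∈ {γ : ℝ | 0 < γ ∧ Pcond ω γ} := ⟨by linarith, hp⟩
      have h1 : ENNReal.ofReal δ = ENNReal.ofReal (δ - 1) + 1 := by
        rw [← ENNReal.ofReal_one, ← ENNReal.ofReal_add (by linarith) zero_le_one]
        norm_num
      rw [h1, gammaIndex]
      exact add_le_add_left
        (le_iSup₂ (f := fun γ (_ : γ ∈ {γ : ℝ | 0 < γ ∧ Pcond ω γ}) =>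
          ENNReal.ofReal γ) (δ - 1) hmem) 1
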